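/- Let A be a real d×n matrix, b ∈ ℝ^d, P a real m×n matrix, f : ℝ → ℝ convex and three times differentiable, ε > 0, R > 0, τ > 0, and w ∈ ℝ^m. Let r_i = R^{−2}(f''(w_i) + ε·Φ(w)/m), suppose there exists x* with A x* = b and ‖P x*‖_∞ ≤ R, and let Δ̃ attain the minimum of ∑_i r_i (PΔ)_i² over {Δ : AΔ = b}. Let I ⊆ { i : |(PΔ̃)_i| ≥ R·τ }, and let w' ∈ ℝ^m satisfy w'_j = w_j for j ∉ I and f''(w'_i) ≤ (1+ε)·f''(w_i) for i ∈ I. Then Φ(w') ≤ (1 + ε·(1+ε)/τ)·Φ(w). -/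

import Mathlib

open scoped BigOperators

lemma mono_deriv_nonneg' {g : ℝ → ℝ} (hg : Monotone g) (hd : Differentiable ℝ g)
    (x : ℝ) : 0 ≤ deriv g x := by
  have h : Filter.Tendsto (slope g x) (nhdsWithin x (Set.Ioi x)) (nhds (deriv g x)) :=
    (hasDerivAt_iff_tendsto_slope.mp (hd x).hasDerivAt).mono_left
      (nhdsWithin_mono x (fun y hy => ne_of_gt hy))
  refine ge_of_tendsto h ?_
  filter_upwards [self_mem_nhdsWithin] with y hy
  have hxy : x < y := hy
  have : 0 ≤ (g y - g x) / (y - x) :=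
    div_nonneg (sub_nonneg.mpr (hg hxy.le)) (sub_nonneg.mpr hxy.le)
  simpa [slope_def_field, div_eq_inv_mul] using this

/-- Lemma 3.2, single width-reduction step bound on Φ:
Φ(w') ≤ (1 + ε(1+ε)/τ)·Φ(w). -/
theorem phi_width_step
    (d n m : ℕ) (A : Matrix (Fin d) (Fin n) ℝ) (b : Fin d → ℝ)
    (P : Matrix (Fin m) (Fin n) ℝ) (f : ℝ → ℝ)
    (hconv : ConvexOn ℝ Set.univ f)
    (hf1 : Differentiable ℝ f) (hf2 : Differentiable ℝ (deriv f))
    (hf3 : Differentiable ℝ (deriv (deriv f)))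
    (ε R τ : ℝ) (hε : 0 < ε) (hR : 0 < R) (hτ : 0 < τ)
    (w : Fin m → ℝ) (r : Fin m → ℝ)
    (hr : ∀ i, r i = 1 / R ^ 2 *
      (deriv (deriv f) (w i) + ε * (∑ j, deriv (deriv f) (w j)) / m))
    (xstar : Fin n → ℝ) (hxA : A.mulVec xstar = b)
    (hxR : ‖P.mulVec xstar‖ ≤ R)
    (Δt : Fin n → ℝ) (hΔA : A.mulVec Δt = b)
    (hΔmin : ∀ Δ : Fin n → ℝ, A.mulVec Δ = b →
      (∑ i, r i * (P.mulVec Δt) i ^ 2) ≤ ∑ i, r i * (P.mulVec Δ) i ^ 2)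
    (I : Finset (Fin m))
    (hIwidth : ∀ i ∈ I, R * τ ≤ |(P.mulVec Δt) i|)
    (w' : Fin m → ℝ)
    (hw'nI : ∀ j ∉ I, w' j = w j)
    (hw'I : ∀ i ∈ I, deriv (deriv f) (w' i) ≤ (1 + ε) * deriv (deriv f) (w i)) :
    (∑ i, deriv (deriv f) (w' i)) ≤
      (1 + ε * (1 + ε) / τ) * ∑ i, deriv (deriv f) (w i) := by
  -- f'' is nonnegative everywhere
  have hmono : Monotone (deriv f) := by
    have := hconv.monotoneOn_deriv (fun x _ => hf1 x)
    rwa [monotoneOn_univ] at this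
  have hF : ∀ x : ℝ, 0 ≤ deriv (deriv f) x := mono_deriv_nonneg' hmono hf2
  set F : Fin m → ℝ := fun i => deriv (deriv f) (w i) with hFdef
  set Φ : ℝ := ∑ j, deriv (deriv f) (w j) with hΦdef
  have hΦ0 : 0 ≤ Φ := Finset.sum_nonneg fun j _ => hF _
  rcases Nat.eq_zero_or_pos m with hm | hm
  · subst hm
    simp only [Finset.univ_eq_empty, Finset.sum_empty] at *
    exact mul_nonneg (by positivity) hΦ0
  have hmpos : (0:ℝ) < m := by exact_mod_cast hm
  -- r is nonneg, and f''(w i) + εΦ/m = r i * R²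
  have hrR : ∀ i, r i * R ^ 2 = deriv (deriv f) (w i) + ε * Φ / m := by
    intro i
    rw [hr i]
    field_simp
  have hrpos : ∀ i, 0 ≤ r i := by
    intro i
    rw [hr i]
    exact mul_nonneg (by positivity)
      (add_nonneg (hF _) (div_nonneg (mul_nonneg hε.le hΦ0) hmpos.le))
  -- upper bound on the energy
  have hE1 : (∑ i, r i * (P.mulVec Δt) i ^ 2) ≤ ∑ i, r i * (P.mulVec xstar) i ^ 2 :=
    hΔmin xstar hxA
  have hE2 : (∑ i, r i * (P.mulVec xstar) i ^ 2) ≤ (1 + ε) * Φ := by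
    have hterm : ∀ i, r i * (P.mulVec xstar) i ^ 2 ≤ r i * R ^ 2 := by
      intro i
      refine mul_le_mul_of_nonneg_left ?_ (hrpos i)
      have habs : |(P.mulVec xstar) i| ≤ R := by
        calc |(P.mulVec xstar) i| = ‖(P.mulVec xstar) i‖ := rfl
          _ ≤ ‖P.mulVec xstar‖ := norm_le_pi_norm _ i
          _ ≤ R := hxR
      calc (P.mulVec xstar) i ^ 2 = |(P.mulVec xstar) i| ^ 2 := (sq_abs _).symm
        _ ≤ R ^ 2 := by exact pow_le_pow_left₀ (abs_nonneg _) habs 2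
    calc (∑ i, r i * (P.mulVec xstar) i ^ 2) ≤ ∑ i, r i * R ^ 2 :=
          Finset.sum_le_sum fun i _ => hterm i
      _ = ∑ i : Fin m, (deriv (deriv f) (w i) + ε * Φ / m) := by
          exact Finset.sum_congr rfl fun i _ => hrR i
      _ = Φ + (m : ℝ) * (ε * Φ / m) := by
          rw [Finset.sum_add_distrib, Finset.sum_const, Finset.card_univ]
          simp [nsmul_eq_mul, hΦdef]
      _ = (1 + ε) * Φ := by field_simp
  -- lower bound: τ² ∑_{i∈I} f''(w i) ≤ energy
  set S : ℝ := ∑ i ∈ I, deriv (deriv f) (w i) with hSdef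
  have hS0 : 0 ≤ S := Finset.sum_nonneg fun i _ => hF _
  have hSΦ : S ≤ Φ := Finset.sum_le_sum_of_subset_of_nonneg (Finset.subset_univ I)
    (fun i _ _ => hF _)
  have hlow : τ ^ 2 * S ≤ (1 + ε) * Φ := by
    have h1 : ∀ i ∈ I, τ ^ 2 * deriv (deriv f) (w i) ≤ r i * (P.mulVec Δt) i ^ 2 := by
      intro i hi
      have habs : R * τ ≤ |(P.mulVec Δt) i| := hIwidth i hi
      have hsq : (R * τ) ^ 2 ≤ (P.mulVec Δt) i ^ 2 := by
        calc (R * τ) ^ 2 ≤ |(P.mulVec Δt) i| ^ 2 :=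
              pow_le_pow_left₀ (by positivity) habs 2
          _ = (P.mulVec Δt) i ^ 2 := sq_abs _
      have h2 : r i * (R * τ) ^ 2 ≤ r i * (P.mulVec Δt) i ^ 2 :=
        mul_le_mul_of_nonneg_left hsq (hrpos i)
      have h3 : r i * (R * τ) ^ 2 = τ ^ 2 * (deriv (deriv f) (w i) + ε * Φ / m) := by
        have := hrR i
        nlinarith [hrR i]
      have h4 : τ ^ 2 * deriv (deriv f) (w i) ≤ r i * (R * τ) ^ 2 := by
        rw [h3]
        have : 0 ≤ τ ^ 2 * (ε * Φ / m) := by positivity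
        nlinarith
      linarith
    calc τ ^ 2 * S = ∑ i ∈ I, τ ^ 2 * deriv (deriv f) (w i) := by
          rw [hSdef, Finset.mul_sum]
      _ ≤ ∑ i ∈ I, r i * (P.mulVec Δt) i ^ 2 := Finset.sum_le_sum h1
      _ ≤ ∑ i, r i * (P.mulVec Δt) i ^ 2 :=
          Finset.sum_le_sum_of_subset_of_nonneg (Finset.subset_univ I)
            (fun i _ _ => mul_nonneg (hrpos i) (sq_nonneg _))
      _ ≤ (1 + ε) * Φ := hE1.trans hE2
  -- S ≤ (1+ε) Φ / τ
  have hSkey : τ * S ≤ (1 + ε) * Φ := by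
    rcases le_or_gt τ 1 with h | h
    · have : τ * S ≤ 1 * S := mul_le_mul_of_nonneg_right h hS0
      have h2 : S ≤ (1 + ε) * Φ := by nlinarith
      nlinarith
    · have h2 : τ * S ≤ τ ^ 2 * S := by
        nlinarith [mul_nonneg (mul_nonneg hτ.le (sub_nonneg.mpr h.le)) hS0]
      linarith
  -- combine
  have hsplit : (∑ i, deriv (deriv f) (w' i)) ≤ Φ + ε * S := by
    have hdecomp : (∑ i, deriv (deriv f) (w' i)) =
        (∑ i ∈ I, deriv (deriv f) (w' i)) + ∑ i ∈ Iᶜ, deriv (deriv f) (w' i) :=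
      (Finset.sum_add_sum_compl I _).symm
    have hΦdecomp : Φ = (∑ i ∈ I, deriv (deriv f) (w i)) + ∑ i ∈ Iᶜ, deriv (deriv f) (w i) :=
      (Finset.sum_add_sum_compl I _).symm
    have hI : (∑ i ∈ I, deriv (deriv f) (w' i)) ≤
        (∑ i ∈ I, deriv (deriv f) (w i)) + ε * S := by
      have : (∑ i ∈ I, deriv (deriv f) (w' i)) ≤
          ∑ i ∈ I, (1 + ε) * deriv (deriv f) (w i) :=
        Finset.sum_le_sum fun i hi => hw'I i hi
      rw [hSdef]
      rw [Finset.mul_sum] at *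
      calc (∑ i ∈ I, deriv (deriv f) (w' i)) ≤
            ∑ i ∈ I, (1 + ε) * deriv (deriv f) (w i) := this
        _ = (∑ i ∈ I, deriv (deriv f) (w i)) + ∑ i ∈ I, ε * deriv (deriv f) (w i) := by
            rw [← Finset.sum_add_distrib]; congr 1; ext i; ring
    have hIc : (∑ i ∈ Iᶜ, deriv (deriv f) (w' i)) = ∑ i ∈ Iᶜ, deriv (deriv f) (w i) :=
      Finset.sum_congr rfl fun i hi => by rw [hw'nI i (Finset.mem_compl.mp hi)]
    rw [hdecomp, hIc, hΦdecomp]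
    linarith
  have hlast : ε * S ≤ ε * (1 + ε) / τ * Φ := by
    rw [div_mul_eq_mul_div, le_div_iff₀ hτ]
    nlinarith [mul_le_mul_of_nonneg_left hSkey hε.le]
  calc (∑ i, deriv (deriv f) (w' i)) ≤ Φ + ε * S := hsplit
    _ ≤ Φ + ε * (1 + ε) / τ * Φ := by linarith
    _ = (1 + ε * (1 + ε) / τ) * Φ := by ring
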